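/- arXiv:1103.3267 — 10 statements merged into one kernel-verified Lean document; each statement's English description precedes it below -/
import Mathlib

section
/- Let u : ℝ × ℝ → ℝ be twice continuously differentiable and let g¹, g² : ℝ × ℝ → ℝ be continuously differentiable with g¹_x + g¹_t = 0 and g²_x − g²_t = 0 at every point. Then at every point (x,t): ∂_x[(g¹+g²)u_x − (g¹−g²)u_t] + ∂_t[(g¹−g²)u_x − (g¹+g²)u_t] = (g¹+g²)(u_xx − u_tt). -/
/-- Partial derivative with respect to the first (space) variable `x`. -/
noncomputable def px (u : ℝ × ℝ → ℝ) (p : ℝ × ℝ) : ℝ := fderiv ℝ u p (1, 0)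

/-- Partial derivative with respect to the second (time) variable `t`. -/
noncomputable def pt (u : ℝ × ℝ → ℝ) (p : ℝ × ℝ) : ℝ := fderiv ℝ u p (0, 1)

lemma deriv_expand (f g a b : ℝ × ℝ → ℝ) (p : ℝ × ℝ) (v : ℝ × ℝ)
    (hf : DifferentiableAt ℝ f p) (hg : DifferentiableAt ℝ g p)
    (ha : DifferentiableAt ℝ a p) (hb : DifferentiableAt ℝ b p) :
    fderiv ℝ (fun q => f q * a q - g q * b q) p v
      = fderiv ℝ f p v * a p + f p * fderiv ℝ a p v
        - (fderiv ℝ g p v * b p + g p * fderiv ℝ b p v) := by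
  rw [fderiv_fun_sub (f := fun q => f q * a q) (g := fun q => g q * b q) (hf.mul ha) (hg.mul hb), fderiv_fun_mul hf ha, fderiv_fun_mul hg hb]
  simp [mul_comm]
  ring

/-- For `u` twice continuously differentiable and `g¹, g²` continuously differentiable with
`g¹_x + g¹_t = 0`, `g²_x − g²_t = 0`, the divergence
`D_x[(g¹+g²)u_x − (g¹−g²)u_t] + D_t[(g¹−g²)u_x − (g¹+g²)u_t]` equals
`(g¹+g²)(u_xx − u_tt)` at every point. -/
theorem stmt_2 (u : ℝ × ℝ → ℝ) (hu : ContDiff ℝ 2 u)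
    (g1 g2 : ℝ × ℝ → ℝ) (hg1 : ContDiff ℝ 1 g1) (hg2 : ContDiff ℝ 1 g2)
    (hc1 : ∀ p, px g1 p + pt g1 p = 0) (hc2 : ∀ p, px g2 p - pt g2 p = 0)
    (p : ℝ × ℝ) :
    px (fun q => (g1 q + g2 q) * px u q - (g1 q - g2 q) * pt u q) p
      + pt (fun q => (g1 q - g2 q) * px u q - (g1 q + g2 q) * pt u q) p
      = (g1 p + g2 p) * (px (px u) p - pt (pt u) p) := by
  have hud : Differentiable ℝ u := hu.differentiable (by norm_num)
  have hfd : ContDiff ℝ 1 (fderiv ℝ u) := hu.fderiv_right le_rfl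
  have hpx : ContDiff ℝ 1 (px u) := hfd.clm_apply contDiff_const
  have hpt : ContDiff ℝ 1 (pt u) := hfd.clm_apply contDiff_const
  have hpxd : DifferentiableAt ℝ (px u) p := (hpx.differentiable one_ne_zero) p
  have hptd : DifferentiableAt ℝ (pt u) p := (hpt.differentiable one_ne_zero) p
  have hg1d : DifferentiableAt ℝ g1 p := (hg1.differentiable one_ne_zero) p
  have hg2d : DifferentiableAt ℝ g2 p := (hg2.differentiable one_ne_zero) p
  -- symmetry of second derivative
  have hsym : px (pt u) p = pt (px u) p := by
    have hf' : ∀ y, HasFDerivAt u (fderiv ℝ u y) y := fun y => (hud y).hasFDerivAt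
    have hx : HasFDerivAt (fderiv ℝ u) (fderiv ℝ (fderiv ℝ u) p) p :=
      ((hfd.differentiable one_ne_zero) p).hasFDerivAt
    have key := second_derivative_symmetric hf' hx ((1:ℝ),(0:ℝ)) ((0:ℝ),(1:ℝ))
    have e1 : px (pt u) p = (fderiv ℝ (fderiv ℝ u) p (1,0)) (0,1) := by
      unfold px pt
      have : (fun q => fderiv ℝ u q ((0:ℝ),(1:ℝ)))
          = ⇑(ContinuousLinearMap.apply ℝ ℝ (((0:ℝ),(1:ℝ)))) ∘ fderiv ℝ u := rfl
      rw [this, fderiv_comp p ((ContinuousLinearMap.apply ℝ ℝ ((0:ℝ),(1:ℝ))).differentiableAt)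
        ((hfd.differentiable one_ne_zero) p)]
      simp
    have e2 : pt (px u) p = (fderiv ℝ (fderiv ℝ u) p (0,1)) (1,0) := by
      unfold px pt
      have : (fun q => fderiv ℝ u q ((1:ℝ),(0:ℝ)))
          = ⇑(ContinuousLinearMap.apply ℝ ℝ (((1:ℝ),(0:ℝ)))) ∘ fderiv ℝ u := rfl
      rw [this, fderiv_comp p ((ContinuousLinearMap.apply ℝ ℝ ((1:ℝ),(0:ℝ))).differentiableAt)
        ((hfd.differentiable one_ne_zero) p)]
      simp
    rw [e1, e2, ← key]
  have E1 := deriv_expand (fun q => g1 q + g2 q) (fun q => g1 q - g2 q) (px u) (pt u) p (1,0)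
    (hg1d.add hg2d) (hg1d.sub hg2d) hpxd hptd
  have E2 := deriv_expand (fun q => g1 q - g2 q) (fun q => g1 q + g2 q) (px u) (pt u) p (0,1)
    (hg1d.sub hg2d) (hg1d.add hg2d) hpxd hptd
  have dadd : ∀ v, fderiv ℝ (fun q => g1 q + g2 q) p v = fderiv ℝ g1 p v + fderiv ℝ g2 p v := by
    intro v; rw [fderiv_fun_add hg1d hg2d]; simp
  have dsub : ∀ v, fderiv ℝ (fun q => g1 q - g2 q) p v = fderiv ℝ g1 p v - fderiv ℝ g2 p v := by
    intro v; rw [fderiv_fun_sub hg1d hg2d]; simp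
  have h1 := hc1 p
  have h2 := hc2 p
  unfold px pt at *
  rw [E1, E2, dadd, dadd, dsub, dsub]
  linear_combination (fderiv ℝ u p (1,0)) * h1 + (fderiv ℝ u p (1,0)) * h2
    - (fderiv ℝ u p (0,1)) * h1 + (fderiv ℝ u p (0,1)) * h2 - (g1 p - g2 p) * hsym
end

section
/- Let u : ℝ × ℝ → ℝ be twice continuously differentiable and satisfy the wave equation u_tt − u_xx = 0 at every point, and let g¹, g² : ℝ × ℝ → ℝ be continuously differentiable with g¹_x + g¹_t = 0 and g²_x − g²_t = 0 at every point. Then the conservation law ∂_x[(g¹+g²)u_x − (g¹−g²)u_t] + ∂_t[(g¹−g²)u_x − (g¹+g²)u_t] = 0 holds at every point (x,t). -/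
/-- Derivative of a partial-derivative function, expressed via the second derivative. -/
lemma pd_apply (u : ℝ × ℝ → ℝ) (hu : ContDiff ℝ 2 u) (p v w : ℝ × ℝ) :
    fderiv ℝ (fun q => fderiv ℝ u q v) p w = fderiv ℝ (fderiv ℝ u) p w v := by
  have hF : ContDiff ℝ 1 (fderiv ℝ u) := hu.fderiv_right (by norm_num)
  have hD : HasFDerivAt (fderiv ℝ u) (fderiv ℝ (fderiv ℝ u) p) p :=
    (hF.differentiable one_ne_zero p).hasFDerivAt
  have h : HasFDerivAt (fun q => fderiv ℝ u q v)
      ((ContinuousLinearMap.apply ℝ ℝ v).comp (fderiv ℝ (fderiv ℝ u) p)) p :=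
    (ContinuousLinearMap.apply ℝ ℝ v).hasFDerivAt.comp p hD
  rw [h.fderiv]; rfl

/-- If `u` solves the wave equation `u_tt − u_xx = 0` and `g¹_x + g¹_t = 0`,
`g²_x − g²_t = 0`, then the conservation law
`D_x[(g¹+g²)u_x − (g¹−g²)u_t] + D_t[(g¹−g²)u_x − (g¹+g²)u_t] = 0` holds everywhere. -/
theorem stmt_3 (u : ℝ × ℝ → ℝ) (hu : ContDiff ℝ 2 u)
    (hwave : ∀ p, pt (pt u) p - px (px u) p = 0)
    (g1 g2 : ℝ × ℝ → ℝ) (hg1 : ContDiff ℝ 1 g1) (hg2 : ContDiff ℝ 1 g2)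
    (hc1 : ∀ p, px g1 p + pt g1 p = 0) (hc2 : ∀ p, px g2 p - pt g2 p = 0)
    (p : ℝ × ℝ) :
    px (fun q => (g1 q + g2 q) * px u q - (g1 q - g2 q) * pt u q) p
      + pt (fun q => (g1 q - g2 q) * px u q - (g1 q + g2 q) * pt u q) p = 0 := by
  have hux : ContDiff ℝ 1 (fun q => fderiv ℝ u q (1, 0)) :=
    (hu.fderiv_right (by norm_num)).clm_apply contDiff_const
  have hut : ContDiff ℝ 1 (fun q => fderiv ℝ u q (0, 1)) :=
    (hu.fderiv_right (by norm_num)).clm_apply contDiff_const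
  have h1 : HasFDerivAt g1 (fderiv ℝ g1 p) p := (hg1.differentiable one_ne_zero p).hasFDerivAt
  have h2 : HasFDerivAt g2 (fderiv ℝ g2 p) p := (hg2.differentiable one_ne_zero p).hasFDerivAt
  have hx : HasFDerivAt (fun q => fderiv ℝ u q (1, 0))
      (fderiv ℝ (fun q => fderiv ℝ u q (1, 0)) p) p :=
    (hux.differentiable one_ne_zero p).hasFDerivAt
  have ht : HasFDerivAt (fun q => fderiv ℝ u q (0, 1))
      (fderiv ℝ (fun q => fderiv ℝ u q (0, 1)) p) p :=
    (hut.differentiable one_ne_zero p).hasFDerivAt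
  set Dg1 := fderiv ℝ g1 p
  set Dg2 := fderiv ℝ g2 p
  set Dux := fderiv ℝ (fun q => fderiv ℝ u q (1, 0)) p
  set Dut := fderiv ℝ (fun q => fderiv ℝ u q (0, 1)) p
  simp only [px, pt] at hwave hc1 hc2 ⊢
  have hf1 : HasFDerivAt (fun q => (g1 q + g2 q) * fderiv ℝ u q (1,0) - (g1 q - g2 q) * fderiv ℝ u q (0,1))
      (((g1 p + g2 p) • Dux + (fderiv ℝ u p (1,0)) • (Dg1 + Dg2))
        - ((g1 p - g2 p) • Dut + (fderiv ℝ u p (0,1)) • (Dg1 - Dg2))) p :=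
    ((h1.add h2).mul hx).sub ((h1.sub h2).mul ht)
  have hf2 : HasFDerivAt (fun q => (g1 q - g2 q) * fderiv ℝ u q (1,0) - (g1 q + g2 q) * fderiv ℝ u q (0,1))
      (((g1 p - g2 p) • Dux + (fderiv ℝ u p (1,0)) • (Dg1 - Dg2))
        - ((g1 p + g2 p) • Dut + (fderiv ℝ u p (0,1)) • (Dg1 + Dg2))) p :=
    ((h1.sub h2).mul hx).sub ((h1.add h2).mul ht)
  have hsymm : Dux (0,1) = Dut (1,0) := by
    have hs := (hu.contDiffAt (x := p)).isSymmSndFDerivAt (by simp [minSmoothness_of_isRCLikeNormedField]) (0,1) (1,0)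
    rw [pd_apply u hu, pd_apply u hu]
    exact hs
  have hwave' : Dut (0,1) - Dux (1,0) = 0 := hwave p
  have hc1' : Dg1 (1,0) + Dg1 (0,1) = 0 := hc1 p
  have hc2' : Dg2 (1,0) - Dg2 (0,1) = 0 := hc2 p
  rw [hf1.fderiv, hf2.fderiv]
  simp only [ContinuousLinearMap.sub_apply, ContinuousLinearMap.add_apply,
    ContinuousLinearMap.smul_apply, smul_eq_mul]
  linear_combination (g1 p - g2 p) * hsymm - (g1 p + g2 p) * hwave'
    + (fderiv ℝ u p (1,0) - fderiv ℝ u p (0,1)) * hc1'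
    + (fderiv ℝ u p (1,0) + fderiv ℝ u p (0,1)) * hc2'
end

section
/- Lagrange-multiplier identity for the shallow water relabelling symmetries: let x, y : ℝ³ → ℝ be smooth functions of (a¹, a², t) with J = x_{,1}y_{,2} − x_{,2}y_{,1} nowhere zero, h = 1/J, and let f, g ∈ ℝ. Define E_x = −ẍ + fẏ − g·∂h/∂x and E_y = −ÿ − fẋ − g·∂h/∂y, and set ν¹ = ẋx_{,1} + ẏy_{,1} + f·x·y_{,1}, ν² = ẋx_{,2} + ẏy_{,2} + f·x·y_{,2}, ν³ = −½(ẋ² + ẏ²) − f·x·ẏ + g·h. Then the identities x_{,1}E_x + y_{,1}E_y = −ν̇¹ − ν³_{,1} and x_{,2}E_x + y_{,2}E_y = −ν̇² − ν³_{,2} hold at every point, identically in x and y. -/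
noncomputable section

/-- Partial derivative with respect to the label `a¹`. -/
def d1 (F : ℝ × ℝ × ℝ → ℝ) (p : ℝ × ℝ × ℝ) : ℝ := fderiv ℝ F p (1, 0, 0)

/-- Partial derivative with respect to the label `a²`. -/
def d2 (F : ℝ × ℝ × ℝ → ℝ) (p : ℝ × ℝ × ℝ) : ℝ := fderiv ℝ F p (0, 1, 0)

/-- Partial derivative with respect to time `t` (overdot). -/
def dt (F : ℝ × ℝ × ℝ → ℝ) (p : ℝ × ℝ × ℝ) : ℝ := fderiv ℝ F p (0, 0, 1)

/-- The Jacobian `J = x_{,1}y_{,2} − x_{,2}y_{,1}`. -/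
def Jac (x y : ℝ × ℝ × ℝ → ℝ) (p : ℝ × ℝ × ℝ) : ℝ :=
  d1 x p * d2 y p - d2 x p * d1 y p

/-- The fluid depth `h = 1/J`. -/
def dep (x y : ℝ × ℝ × ℝ → ℝ) : ℝ × ℝ × ℝ → ℝ := fun p => 1 / Jac x y p

/-- The Eulerian derivative `∂F/∂x = h(y_{,2}F_{,1} − y_{,1}F_{,2})`. -/
def Dex (x y F : ℝ × ℝ × ℝ → ℝ) (p : ℝ × ℝ × ℝ) : ℝ :=
  dep x y p * (d2 y p * d1 F p - d1 y p * d2 F p)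

/-- The Eulerian derivative `∂F/∂y = h(−x_{,2}F_{,1} + x_{,1}F_{,2})`. -/
def Dey (x y F : ℝ × ℝ × ℝ → ℝ) (p : ℝ × ℝ × ℝ) : ℝ :=
  dep x y p * (-(d2 x p) * d1 F p + d1 x p * d2 F p)

/-- Euler–Lagrange expression `E_x = −ẍ + fẏ − g·∂h/∂x` of Salmon's shallow water Lagrangian. -/
def SWEx (x y : ℝ × ℝ × ℝ → ℝ) (f g : ℝ) (p : ℝ × ℝ × ℝ) : ℝ :=
  -(dt (fun q => dt x q) p) + f * dt y p - g * Dex x y (dep x y) p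

/-- Euler–Lagrange expression `E_y = −ÿ − fẋ − g·∂h/∂y` of Salmon's shallow water Lagrangian. -/
def SWEy (x y : ℝ × ℝ × ℝ → ℝ) (f g : ℝ) (p : ℝ × ℝ × ℝ) : ℝ :=
  -(dt (fun q => dt y q) p) - f * dt x p - g * Dey x y (dep x y) p

/-- Lagrange multiplier `ν¹ = ẋx_{,1} + ẏy_{,1} + f·x·y_{,1}`. -/
def nu1 (x y : ℝ × ℝ × ℝ → ℝ) (f : ℝ) : ℝ × ℝ × ℝ → ℝ :=
  fun p => dt x p * d1 x p + dt y p * d1 y p + f * x p * d1 y p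

/-- Lagrange multiplier `ν² = ẋx_{,2} + ẏy_{,2} + f·x·y_{,2}`. -/
def nu2 (x y : ℝ × ℝ × ℝ → ℝ) (f : ℝ) : ℝ × ℝ × ℝ → ℝ :=
  fun p => dt x p * d2 x p + dt y p * d2 y p + f * x p * d2 y p

/-- Lagrange multiplier `ν³ = −½(ẋ² + ẏ²) − f·x·ẏ + g·h`. -/
def nu3 (x y : ℝ × ℝ × ℝ → ℝ) (f g : ℝ) : ℝ × ℝ × ℝ → ℝ :=
  fun p => -(1 / 2 : ℝ) * ((dt x p) ^ 2 + (dt y p) ^ 2) - f * x p * dt y p + g * dep x y p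

open scoped ContDiff

private lemma pdSmooth {F : ℝ × ℝ × ℝ → ℝ} (hF : ContDiff ℝ ∞ F) (v : ℝ × ℝ × ℝ) :
    ContDiff ℝ ∞ (fun p => fderiv ℝ F p v) :=
  (hF.fderiv_right (by simp)).clm_apply contDiff_const

private lemma pdComm {F : ℝ × ℝ × ℝ → ℝ} (hF : ContDiff ℝ ∞ F) (p v w : ℝ × ℝ × ℝ) :
    fderiv ℝ (fun q => fderiv ℝ F q v) p w = fderiv ℝ (fun q => fderiv ℝ F q w) p v := by
  have hd : DifferentiableAt ℝ (fderiv ℝ F) p :=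
    ((hF.fderiv_right (m := ∞) (by simp)).differentiable (by simp)).differentiableAt
  rw [fderiv_clm_apply hd (differentiableAt_const v),
      fderiv_clm_apply hd (differentiableAt_const w)]
  simp
  exact (hF.contDiffAt.isSymmSndFDerivAt (by simp; exact WithTop.coe_le_coe.2 le_top)).eq w v


private lemma alg1 (a1 a2 b1 b2 H1 H2 : ℝ) (h : a1 * b2 - a2 * b1 ≠ 0) :
    a1 * (1 / (a1 * b2 - a2 * b1) * (b2 * H1 - b1 * H2))
      + b1 * (1 / (a1 * b2 - a2 * b1) * (-a2 * H1 + a1 * H2)) = H1 := by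
  field_simp
  ring

private lemma alg2 (a1 a2 b1 b2 H1 H2 : ℝ) (h : a1 * b2 - a2 * b1 ≠ 0) :
    a2 * (1 / (a1 * b2 - a2 * b1) * (b2 * H1 - b1 * H2))
      + b2 * (1 / (a1 * b2 - a2 * b1) * (-a2 * H1 + a1 * H2)) = H2 := by
  field_simp
  ring

private lemma key (x y : ℝ × ℝ × ℝ → ℝ) (hx : ContDiff ℝ ∞ x) (hy : ContDiff ℝ ∞ y)
    (f g : ℝ) (hJ : ∀ p, Jac x y p ≠ 0) (p v : ℝ × ℝ × ℝ)
    (hkey : fderiv ℝ x p v * Dex x y (dep x y) p + fderiv ℝ y p v * Dey x y (dep x y) p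
        = fderiv ℝ (dep x y) p v) :
    fderiv ℝ x p v * SWEx x y f g p + fderiv ℝ y p v * SWEy x y f g p
      = -(fderiv ℝ (fun q => fderiv ℝ x q (0, 0, 1) * fderiv ℝ x q v
            + fderiv ℝ y q (0, 0, 1) * fderiv ℝ y q v + f * x q * fderiv ℝ y q v) p (0, 0, 1))
        - fderiv ℝ (nu3 x y f g) p v := by
  have top1 : (∞ : WithTop ℕ∞) ≠ 0 := by simp
  have dX : ∀ w, DifferentiableAt ℝ (fun q => fderiv ℝ x q w) p := fun w =>
    ((pdSmooth hx w).differentiable top1).differentiableAt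
  have dY : ∀ w, DifferentiableAt ℝ (fun q => fderiv ℝ y q w) p := fun w =>
    ((pdSmooth hy w).differentiable top1).differentiableAt
  have hJs : ContDiff ℝ ∞ (Jac x y) := by
    have : ContDiff ℝ ∞ fun q => fderiv ℝ x q (1, 0, 0) * fderiv ℝ y q (0, 1, 0)
        - fderiv ℝ x q (0, 1, 0) * fderiv ℝ y q (1, 0, 0) :=
      ((pdSmooth hx _).mul (pdSmooth hy _)).sub ((pdSmooth hx _).mul (pdSmooth hy _))
    exact this
  have hdif : DifferentiableAt ℝ (fun q => (Jac x y q)⁻¹) p :=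
    ((hJs.differentiable top1) p).inv (hJ p)
  have hdep : DifferentiableAt ℝ (dep x y) p := by
    have e : dep x y = fun q => (Jac x y q)⁻¹ := by
      funext q
      simp [dep, one_div]
    rw [e]
    exact hdif
  have Hx : HasFDerivAt x (fderiv ℝ x p) p := ((hx.differentiable top1) p).hasFDerivAt
  have Hxt : HasFDerivAt (fun q => fderiv ℝ x q (0, 0, 1))
      (fderiv ℝ (fun q => fderiv ℝ x q (0, 0, 1)) p) p := (dX _).hasFDerivAt
  have Hxv : HasFDerivAt (fun q => fderiv ℝ x q v)
      (fderiv ℝ (fun q => fderiv ℝ x q v) p) p := (dX _).hasFDerivAt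
  have Hyt : HasFDerivAt (fun q => fderiv ℝ y q (0, 0, 1))
      (fderiv ℝ (fun q => fderiv ℝ y q (0, 0, 1)) p) p := (dY _).hasFDerivAt
  have Hyv : HasFDerivAt (fun q => fderiv ℝ y q v)
      (fderiv ℝ (fun q => fderiv ℝ y q v) p) p := (dY _).hasFDerivAt
  have Hh : HasFDerivAt (dep x y) (fderiv ℝ (dep x y) p) p := hdep.hasFDerivAt
  have HA := (((Hxt.mul Hxv).add (Hyt.mul Hyv)).add ((Hx.const_mul f).mul Hyv)).fderiv
  have HB := (((((Hxt.mul Hxt).add (Hyt.mul Hyt)).const_mul (-(1/2 : ℝ))).sub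
      ((Hx.const_mul f).mul Hyt)).add (Hh.const_mul g)).fderiv
  have nu3eq : nu3 x y f g = fun q =>
      -(1/2 : ℝ) * (fderiv ℝ x q (0, 0, 1) * fderiv ℝ x q (0, 0, 1)
          + fderiv ℝ y q (0, 0, 1) * fderiv ℝ y q (0, 0, 1))
        - f * x q * fderiv ℝ y q (0, 0, 1) + g * dep x y q := by
    funext q
    simp only [nu3, dt]
    ring
  simp only [SWEx, SWEy, dt]
  simp only [Pi.mul_def, Pi.add_def, Pi.sub_def] at HA HB
  rw [nu3eq, HA, HB]
  simp only [ContinuousLinearMap.add_apply, ContinuousLinearMap.sub_apply,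
    ContinuousLinearMap.smul_apply, smul_eq_mul]
  rw [pdComm hx p v (0, 0, 1), pdComm hy p v (0, 0, 1)]
  linear_combination (-g : ℝ) * hkey

open scoped ContDiff in
/-- Lagrange-multiplier identities for the shallow water relabelling symmetries:
`x_{,i}E_x + y_{,i}E_y = −ν̇ⁱ − ν³_{,i}` for `i = 1, 2`, identically in `x` and `y`. -/
theorem stmt_9 (x y : ℝ × ℝ × ℝ → ℝ) (hx : ContDiff ℝ ∞ x) (hy : ContDiff ℝ ∞ y)
    (f g : ℝ) (hJ : ∀ p, Jac x y p ≠ 0) (p : ℝ × ℝ × ℝ) :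
    d1 x p * SWEx x y f g p + d1 y p * SWEy x y f g p
        = -(dt (nu1 x y f) p) - d1 (nu3 x y f g) p ∧
    d2 x p * SWEx x y f g p + d2 y p * SWEy x y f g p
        = -(dt (nu2 x y f) p) - d2 (nu3 x y f g) p := by
  have hJp := hJ p
  simp only [Jac, d1, d2] at hJp
  constructor
  · have hkey : fderiv ℝ x p (1,0,0) * Dex x y (dep x y) p
        + fderiv ℝ y p (1,0,0) * Dey x y (dep x y) p = fderiv ℝ (dep x y) p (1,0,0) := by
      simp only [Dex, Dey, d1, d2, show dep x y p = 1 / Jac x y p from rfl, Jac]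
      exact alg1 _ _ _ _ _ _ hJp
    have e1 : nu1 x y f = fun q => fderiv ℝ x q (0, 0, 1) * fderiv ℝ x q (1, 0, 0)
        + fderiv ℝ y q (0, 0, 1) * fderiv ℝ y q (1, 0, 0)
        + f * x q * fderiv ℝ y q (1, 0, 0) := rfl
    simp only [d1, dt]
    rw [e1]
    exact key x y hx hy f g hJ p (1,0,0) hkey
  · have hkey : fderiv ℝ x p (0,1,0) * Dex x y (dep x y) p
        + fderiv ℝ y p (0,1,0) * Dey x y (dep x y) p = fderiv ℝ (dep x y) p (0,1,0) := by
      simp only [Dex, Dey, d1, d2, show dep x y p = 1 / Jac x y p from rfl, Jac]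
      exact alg2 _ _ _ _ _ _ hJp
    have e2 : nu2 x y f = fun q => fderiv ℝ x q (0, 0, 1) * fderiv ℝ x q (0, 1, 0)
        + fderiv ℝ y q (0, 0, 1) * fderiv ℝ y q (0, 1, 0)
        + f * x q * fderiv ℝ y q (0, 1, 0) := rfl
    simp only [d2, dt]
    rw [e2]
    exact key x y hx hy f g hJ p (0,1,0) hkey

end
end

section
/- Conservation laws from the particle relabelling symmetry: let x, y : ℝ³ → ℝ be smooth functions of (a¹, a², t) with J = x_{,1}y_{,2} − x_{,2}y_{,1} nowhere zero, h = 1/J, f, g ∈ ℝ, and suppose the shallow water equations hold at every point: −ẍ + fẏ − g·∂h/∂x = 0 and −ÿ − fẋ − g·∂h/∂y = 0. With ν¹ = ẋx_{,1} + ẏy_{,1} + f·x·y_{,1}, ν² = ẋx_{,2} + ẏy_{,2} + f·x·y_{,2}, ν³ = −½(ẋ² + ẏ²) − f·x·ẏ + g·h, the conservation laws ν̇¹ + ν³_{,1} = 0 and ν̇² + ν³_{,2} = 0 hold at every point. -/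
noncomputable section

open scoped ContDiff

private lemma pdiff_add {F G : ℝ × ℝ × ℝ → ℝ} {p v : ℝ × ℝ × ℝ}
    (hF : DifferentiableAt ℝ F p) (hG : DifferentiableAt ℝ G p) :
    fderiv ℝ (fun q => F q + G q) p v = fderiv ℝ F p v + fderiv ℝ G p v := by
  rw [fderiv_fun_add hF hG]; rfl

private lemma pdiff_mul {F G : ℝ × ℝ × ℝ → ℝ} {p v : ℝ × ℝ × ℝ}
    (hF : DifferentiableAt ℝ F p) (hG : DifferentiableAt ℝ G p) :
    fderiv ℝ (fun q => F q * G q) p v = fderiv ℝ F p v * G p + F p * fderiv ℝ G p v := by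
  rw [fderiv_fun_mul hF hG]
  simp; ring

private lemma pdiff_sub {F G : ℝ × ℝ × ℝ → ℝ} {p v : ℝ × ℝ × ℝ}
    (hF : DifferentiableAt ℝ F p) (hG : DifferentiableAt ℝ G p) :
    fderiv ℝ (fun q => F q - G q) p v = fderiv ℝ F p v - fderiv ℝ G p v := by
  rw [fderiv_fun_sub hF hG]; rfl

private lemma pdiff_const_mul {F : ℝ × ℝ × ℝ → ℝ} {p v : ℝ × ℝ × ℝ} (c : ℝ)
    (hF : DifferentiableAt ℝ F p) :
    fderiv ℝ (fun q => c * F q) p v = c * fderiv ℝ F p v := by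
  rw [fderiv_const_mul hF c]; rfl

private lemma pdiff_sq {F : ℝ × ℝ × ℝ → ℝ} {p v : ℝ × ℝ × ℝ}
    (hF : DifferentiableAt ℝ F p) :
    fderiv ℝ (fun q => F q ^ 2) p v = 2 * F p * fderiv ℝ F p v := by
  have : (fun q => F q ^ 2) = fun q => F q * F q := by funext q; ring
  rw [this, pdiff_mul hF hF]; ring

private lemma pd_smooth {F : ℝ × ℝ × ℝ → ℝ} (hF : ContDiff ℝ ∞ F) (v : ℝ × ℝ × ℝ) :
    ContDiff ℝ ∞ (fun q => fderiv ℝ F q v) :=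
  (ContinuousLinearMap.apply ℝ ℝ v).contDiff.comp (hF.fderiv_right (by simp))

private lemma pdiff_comm {F : ℝ × ℝ × ℝ → ℝ} (hF : ContDiff ℝ ∞ F) (p v w : ℝ × ℝ × ℝ) :
    fderiv ℝ (fun q => fderiv ℝ F q w) p v = fderiv ℝ (fun q => fderiv ℝ F q v) p w := by
  have key : ∀ u : ℝ × ℝ × ℝ, ∀ z : ℝ × ℝ × ℝ,
      fderiv ℝ (fun q => fderiv ℝ F q u) p z = fderiv ℝ (fderiv ℝ F) p z u := by
    intro u z
    have h1 : DifferentiableAt ℝ (fderiv ℝ F) p :=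
      ((hF.fderiv_right (by simp : (∞ : WithTop ℕ∞) + 1 ≤ ∞)).differentiable
        (by simp)).differentiableAt
    have := ((ContinuousLinearMap.apply ℝ ℝ u).hasFDerivAt.comp p h1.hasFDerivAt).fderiv
    rw [show (fun q => fderiv ℝ F q u) = (ContinuousLinearMap.apply ℝ ℝ u) ∘ (fderiv ℝ F)
      from rfl, this]
    rfl
  rw [key w v, key v w]
  exact (hF.contDiffAt.isSymmSndFDerivAt (by simp [minSmoothness_of_isRCLikeNormedField]; exact WithTop.coe_le_coe.2 le_top)).eq v w

open scoped ContDiff in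
/-- Conservation laws from the particle relabelling symmetry: on solutions of the
shallow water equations, `ν̇¹ + ν³_{,1} = 0` and `ν̇² + ν³_{,2} = 0`. -/
theorem stmt_10 (x y : ℝ × ℝ × ℝ → ℝ) (hx : ContDiff ℝ ∞ x) (hy : ContDiff ℝ ∞ y)
    (f g : ℝ) (hJ : ∀ p, Jac x y p ≠ 0)
    (hEx : ∀ p, -(dt (fun q => dt x q) p) + f * dt y p - g * Dex x y (dep x y) p = 0)
    (hEy : ∀ p, -(dt (fun q => dt y q) p) - f * dt x p - g * Dey x y (dep x y) p = 0)
    (p : ℝ × ℝ × ℝ) :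
    dt (nu1 x y f) p + d1 (nu3 x y f g) p = 0 ∧
    dt (nu2 x y f) p + d2 (nu3 x y f g) p = 0 := by
  have hxD : Differentiable ℝ x := hx.differentiable (by simp)
  have hyD : Differentiable ℝ y := hy.differentiable (by simp)
  have hpdx : ∀ v : ℝ × ℝ × ℝ, DifferentiableAt ℝ (fun q => fderiv ℝ x q v) p :=
    fun v => ((pd_smooth hx v).differentiable (by simp)).differentiableAt
  have hpdy : ∀ v : ℝ × ℝ × ℝ, DifferentiableAt ℝ (fun q => fderiv ℝ y q v) p :=
    fun v => ((pd_smooth hy v).differentiable (by simp)).differentiableAt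
  have hJacCD : ContDiff ℝ ∞ (Jac x y) := by
    have : Jac x y = fun q => fderiv ℝ x q (1,0,0) * fderiv ℝ y q (0,1,0)
        - fderiv ℝ x q (0,1,0) * fderiv ℝ y q (1,0,0) := rfl
    rw [this]
    exact ((pd_smooth hx _).mul (pd_smooth hy _)).sub ((pd_smooth hx _).mul (pd_smooth hy _))
  have hdep : DifferentiableAt ℝ (dep x y) p := by
    have h : dep x y = fun q => (Jac x y q)⁻¹ := by funext q; simp [dep, one_div]
    rw [h]
    exact ((hJacCD.differentiable (by simp)) p).inv (hJ p)
  -- Euler–Lagrange equations as substitution rules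
  have hX : fderiv ℝ (fun q => fderiv ℝ x q (0,0,1)) p (0,0,1)
      = f * fderiv ℝ y p (0,0,1) - g * Dex x y (dep x y) p := by
    have := hEx p; simp only [dt] at this; linarith
  have hY : fderiv ℝ (fun q => fderiv ℝ y q (0,0,1)) p (0,0,1)
      = -(f * fderiv ℝ x p (0,0,1)) - g * Dey x y (dep x y) p := by
    have := hEy p; simp only [dt] at this; linarith
  have expand : ∀ w : ℝ × ℝ × ℝ,
      fderiv ℝ (fun q => fderiv ℝ x q (0,0,1) * fderiv ℝ x q w
        + fderiv ℝ y q (0,0,1) * fderiv ℝ y q w + f * x q * fderiv ℝ y q w) p (0,0,1)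
      + fderiv ℝ (nu3 x y f g) p w
      = g * (fderiv ℝ (dep x y) p w
          - Dex x y (dep x y) p * fderiv ℝ x p w
          - Dey x y (dep x y) p * fderiv ℝ y p w) := by
    intro w
    have h1 : DifferentiableAt ℝ (fun q => fderiv ℝ x q (0,0,1) * fderiv ℝ x q w) p :=
      (hpdx _).mul (hpdx _)
    have h2 : DifferentiableAt ℝ (fun q => fderiv ℝ y q (0,0,1) * fderiv ℝ y q w) p :=
      (hpdy _).mul (hpdy _)
    have hfx : DifferentiableAt ℝ (fun q => f * x q) p :=
      (differentiableAt_const f).mul (hxD p)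
    have h3 : DifferentiableAt ℝ (fun q => f * x q * fderiv ℝ y q w) p := hfx.mul (hpdy _)
    have hsq1 : DifferentiableAt ℝ (fun q => fderiv ℝ x q (0,0,1) ^ 2) p := (hpdx _).pow 2
    have hsq2 : DifferentiableAt ℝ (fun q => fderiv ℝ y q (0,0,1) ^ 2) p := (hpdy _).pow 2
    have hS : DifferentiableAt ℝ
        (fun q => fderiv ℝ x q (0,0,1) ^ 2 + fderiv ℝ y q (0,0,1) ^ 2) p := hsq1.add hsq2
    have hT1 : DifferentiableAt ℝ
        (fun q => -(1/2 : ℝ) * (fderiv ℝ x q (0,0,1) ^ 2 + fderiv ℝ y q (0,0,1) ^ 2)) p :=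
      (differentiableAt_const _).mul hS
    have hT2 : DifferentiableAt ℝ (fun q => f * x q * fderiv ℝ y q (0,0,1)) p :=
      hfx.mul (hpdy _)
    have hT3 : DifferentiableAt ℝ (fun q => g * dep x y q) p :=
      (differentiableAt_const g).mul hdep
    rw [pdiff_add (h1.fun_add h2) h3, pdiff_add h1 h2,
      pdiff_mul (hpdx _) (hpdx _), pdiff_mul (hpdy _) (hpdy _),
      pdiff_mul hfx (hpdy _), pdiff_const_mul f (hxD p)]
    have hnu3 : nu3 x y f g = fun q =>
        -(1/2 : ℝ) * (fderiv ℝ x q (0,0,1) ^ 2 + fderiv ℝ y q (0,0,1) ^ 2)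
          - f * x q * fderiv ℝ y q (0,0,1) + g * dep x y q := rfl
    rw [hnu3]
    rw [pdiff_add (hT1.fun_sub hT2) hT3, pdiff_sub hT1 hT2,
      pdiff_const_mul (-(1/2 : ℝ)) hS, pdiff_add hsq1 hsq2,
      pdiff_sq (hpdx _), pdiff_sq (hpdy _),
      pdiff_mul hfx (hpdy _), pdiff_const_mul f (hxD p),
      pdiff_const_mul g hdep]
    rw [pdiff_comm hx p (0,0,1) w, pdiff_comm hy p (0,0,1) w, hX, hY]
    ring
  constructor
  · have h := expand (1,0,0)
    have hnu1 : nu1 x y f = fun q => fderiv ℝ x q (0,0,1) * fderiv ℝ x q (1,0,0)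
        + fderiv ℝ y q (0,0,1) * fderiv ℝ y q (1,0,0) + f * x q * fderiv ℝ y q (1,0,0) := rfl
    simp only [dt, d1] at h ⊢
    rw [hnu1, h]
    simp only [Dex, Dey, dep, Jac, d1, d2, Prod.mk_zero_zero]
    have hJp' : fderiv ℝ y p ((0:ℝ),(1:ℝ),(0:ℝ)) * fderiv ℝ x p ((1:ℝ),(0:ℝ),(0:ℝ))
        - fderiv ℝ y p ((1:ℝ),(0:ℝ),(0:ℝ)) * fderiv ℝ x p ((0:ℝ),(1:ℝ),(0:ℝ)) ≠ 0 := by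
      have hJp := hJ p
      simp only [Jac, d1, d2] at hJp
      intro hc; apply hJp; linarith
    simp only [Prod.mk_zero_zero] at hJp'
    linear_combination (-(g * fderiv ℝ (dep x y) p ((1:ℝ), (0:ℝ×ℝ)))) * mul_inv_cancel₀ hJp'
  · have h := expand (0,1,0)
    have hnu2 : nu2 x y f = fun q => fderiv ℝ x q (0,0,1) * fderiv ℝ x q (0,1,0)
        + fderiv ℝ y q (0,0,1) * fderiv ℝ y q (0,1,0) + f * x q * fderiv ℝ y q (0,1,0) := rfl
    simp only [dt, d2] at h ⊢
    rw [hnu2, h]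
    simp only [Dex, Dey, dep, Jac, d1, d2, Prod.mk_zero_zero]
    have hJp' : fderiv ℝ y p ((0:ℝ),(1:ℝ),(0:ℝ)) * fderiv ℝ x p ((1:ℝ),(0:ℝ),(0:ℝ))
        - fderiv ℝ y p ((1:ℝ),(0:ℝ),(0:ℝ)) * fderiv ℝ x p ((0:ℝ),(1:ℝ),(0:ℝ)) ≠ 0 := by
      have hJp := hJ p
      simp only [Jac, d1, d2] at hJp
      intro hc; apply hJp; linarith
    simp only [Prod.mk_zero_zero] at hJp'
    linear_combination (-(g * fderiv ℝ (dep x y) p ((0:ℝ),(1:ℝ),(0:ℝ)))) * mul_inv_cancel₀ hJp'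

end
end

section
/- Conservation of potential vorticity: let x, y : ℝ³ → ℝ be smooth functions of (a¹, a², t) with J = x_{,1}y_{,2} − x_{,2}y_{,1} nowhere zero, h = 1/J, f, g ∈ ℝ, and suppose the shallow water equations hold at every point: −ẍ + fẏ − g·∂h/∂x = 0 and −ÿ − fẋ − g·∂h/∂y = 0. Then at every point, ∂/∂t [ (1/h)·( ∂ẏ/∂x − ∂ẋ/∂y + f ) ] = 0. -/
noncomputable section

open scoped ContDiff

/-! ### Auxiliary directional-derivative calculus -/

/-- Directional derivative along a fixed vector. -/
def Dv (v : ℝ × ℝ × ℝ) (F : ℝ × ℝ × ℝ → ℝ) (p : ℝ × ℝ × ℝ) : ℝ := fderiv ℝ F p v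

abbrev E1 : ℝ × ℝ × ℝ := (1, 0, 0)
abbrev E2 : ℝ × ℝ × ℝ := (0, 1, 0)
abbrev E3 : ℝ × ℝ × ℝ := (0, 0, 1)

theorem two_le_inf : (2 : WithTop ℕ∞) ≤ ∞ := by
  rw [show ((2:WithTop ℕ∞)) = ((2:ℕ∞):WithTop ℕ∞) from rfl, WithTop.coe_le_coe]
  exact le_top

@[fun_prop]
theorem Dv.contDiff {F : ℝ × ℝ × ℝ → ℝ} (v : ℝ × ℝ × ℝ) (hF : ContDiff ℝ ∞ F) :
    ContDiff ℝ ∞ (Dv v F) := by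
  have h : ContDiff ℝ ∞ (fderiv ℝ F) := hF.fderiv_right (by simp)
  exact h.clm_apply contDiff_const

theorem ContDiff.dAt {F : ℝ × ℝ × ℝ → ℝ} (hF : ContDiff ℝ ∞ F) (p : ℝ × ℝ × ℝ) :
    DifferentiableAt ℝ F p := (hF.differentiable (by simp)).differentiableAt

theorem Dv_comm {F : ℝ × ℝ × ℝ → ℝ} (hF : ContDiff ℝ ∞ F) (v w p : ℝ × ℝ × ℝ) :
    Dv v (Dv w F) p = Dv w (Dv v F) p := by
  have hd : ContDiff ℝ ∞ (fderiv ℝ F) := hF.fderiv_right (by simp)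
  have hsym := (hF.contDiffAt (x := p)).isSymmSndFDerivAt (by rw [minSmoothness_of_isRCLikeNormedField]; exact two_le_inf)
  have key : ∀ u z : ℝ × ℝ × ℝ,
      fderiv ℝ (fun q => (fderiv ℝ F q) u) p z = fderiv ℝ (fderiv ℝ F) p z u := by
    intro u z
    rw [fderiv_clm_apply ((hd.differentiable (by simp)).differentiableAt)
      (differentiableAt_const u)]
    simp
  show fderiv ℝ (fun q => (fderiv ℝ F q) w) p v = fderiv ℝ (fun q => (fderiv ℝ F q) v) p w
  rw [key, key]
  exact hsym v w

section rules
variable {F G : ℝ × ℝ × ℝ → ℝ} {v p : ℝ × ℝ × ℝ} {c : ℝ}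

theorem Dv_add (hF : ContDiff ℝ ∞ F) (hG : ContDiff ℝ ∞ G) :
    Dv v (fun q => F q + G q) p = Dv v F p + Dv v G p := by
  unfold Dv; rw [fderiv_fun_add (hF.dAt p) (hG.dAt p)]; rfl

theorem Dv_sub (hF : ContDiff ℝ ∞ F) (hG : ContDiff ℝ ∞ G) :
    Dv v (fun q => F q - G q) p = Dv v F p - Dv v G p := by
  unfold Dv; rw [fderiv_fun_sub (hF.dAt p) (hG.dAt p)]; rfl

theorem Dv_neg : Dv v (fun q => -F q) p = -Dv v F p := by
  unfold Dv; rw [fderiv_fun_neg]; rfl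

theorem Dv_mul (hF : ContDiff ℝ ∞ F) (hG : ContDiff ℝ ∞ G) :
    Dv v (fun q => F q * G q) p = Dv v F p * G p + F p * Dv v G p := by
  unfold Dv; rw [fderiv_fun_mul (hF.dAt p) (hG.dAt p)]
  simp; ring

theorem Dv_const : Dv v (fun _ => c) p = 0 := by
  unfold Dv; rw [fderiv_fun_const]; rfl

theorem Dv_const_mul (hF : ContDiff ℝ ∞ F) :
    Dv v (fun q => c * F q) p = c * Dv v F p := by
  unfold Dv; rw [fderiv_const_mul (hF.dAt p)]; rfl

theorem Dv_inv (hF : ContDiff ℝ ∞ F) (hne : F p ≠ 0) :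
    Dv v (fun q => (F q)⁻¹) p = -(Dv v F p) / F p ^ 2 := by
  unfold Dv
  have : (fun q => (F q)⁻¹) = (fun x : ℝ => x⁻¹) ∘ F := rfl
  rw [this, fderiv_comp p (differentiableAt_inv hne) (hF.dAt p), fderiv_inv]
  simp [div_eq_mul_inv, mul_comm]

end rules

/-- Key commutation identity for the Eulerian derivatives:
`y₂ (Dey F)₁ − y₁ (Dey F)₂ + x₂ (Dex F)₁ − x₁ (Dex F)₂ = 0`. -/
theorem keyA (x y F : ℝ × ℝ × ℝ → ℝ) (hx : ContDiff ℝ ∞ x) (hy : ContDiff ℝ ∞ y)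
    (hF : ContDiff ℝ ∞ F) (hJ : ∀ q, Jac x y q ≠ 0) (p : ℝ × ℝ × ℝ) :
    Dv E2 y p * Dv E1 (Dey x y F) p - Dv E1 y p * Dv E2 (Dey x y F) p
      + Dv E2 x p * Dv E1 (Dex x y F) p - Dv E1 x p * Dv E2 (Dex x y F) p = 0 := by
  have hJ' : ∀ q, Dv E1 x q * Dv E2 y q - Dv E2 x q * Dv E1 y q ≠ 0 := hJ
  have hdepc : ContDiff ℝ ∞ (fun q => (Dv E1 x q * Dv E2 y q - Dv E2 x q * Dv E1 y q)⁻¹) :=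
    ContDiff.inv (by fun_prop) hJ'
  have hP : Dex x y F = fun q =>
      (1 / (Dv E1 x q * Dv E2 y q - Dv E2 x q * Dv E1 y q))
        * (Dv E2 y q * Dv E1 F q - Dv E1 y q * Dv E2 F q) := rfl
  have hR : Dey x y F = fun q =>
      (1 / (Dv E1 x q * Dv E2 y q - Dv E2 x q * Dv E1 y q))
        * (-(Dv E2 x q) * Dv E1 F q + Dv E1 x q * Dv E2 F q) := rfl
  rw [hP, hR]
  simp only [one_div]
  simp (disch := first | exact hJ' _ | assumption | fun_prop) only
    [Dv_mul, Dv_add, Dv_sub, Dv_neg, Dv_inv, Dv_const_mul, Dv_const]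
  rw [Dv_comm hx E2 E1 p, Dv_comm hy E2 E1 p, Dv_comm hF E2 E1 p]
  have hne := hJ' p
  field_simp
  ring

open scoped ContDiff in
/-- Conservation of potential vorticity: on solutions of the shallow water equations,
`∂/∂t [(1/h)(∂ẏ/∂x − ∂ẋ/∂y + f)] = 0`. -/
theorem stmt_11 (x y : ℝ × ℝ × ℝ → ℝ) (hx : ContDiff ℝ ∞ x) (hy : ContDiff ℝ ∞ y)
    (f g : ℝ) (hJ : ∀ p, Jac x y p ≠ 0)
    (hEx : ∀ p, -(dt (fun q => dt x q) p) + f * dt y p - g * Dex x y (dep x y) p = 0)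
    (hEy : ∀ p, -(dt (fun q => dt y q) p) - f * dt x p - g * Dey x y (dep x y) p = 0)
    (p : ℝ × ℝ × ℝ) :
    dt (fun q => (1 / dep x y q)
      * (Dex x y (fun r => dt y r) q - Dey x y (fun r => dt x r) q + f)) p = 0 := by
  have hJ' : ∀ q, Dv E1 x q * Dv E2 y q - Dv E2 x q * Dv E1 y q ≠ 0 := hJ
  have hdepc : ContDiff ℝ ∞ (fun q => (Dv E1 x q * Dv E2 y q - Dv E2 x q * Dv E1 y q)⁻¹) :=
    ContDiff.inv (by fun_prop) hJ'
  have hdep : ContDiff ℝ ∞ (dep x y) := by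
    show ContDiff ℝ ∞ (fun q => 1 / (Dv E1 x q * Dv E2 y q - Dv E2 x q * Dv E1 y q))
    simp only [one_div]
    exact ContDiff.inv (by fun_prop) hJ'
  have hXd : ContDiff ℝ ∞ (Dv E3 x) := Dv.contDiff E3 hx
  have hYd : ContDiff ℝ ∞ (Dv E3 y) := Dv.contDiff E3 hy
  have hRc : ContDiff ℝ ∞ (Dey x y (dep x y)) := by
    show ContDiff ℝ ∞ (fun q => dep x y q
      * (-(Dv E2 x q) * Dv E1 (dep x y) q + Dv E1 x q * Dv E2 (dep x y) q))
    fun_prop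
  have hPc : ContDiff ℝ ∞ (Dex x y (dep x y)) := by
    show ContDiff ℝ ∞ (fun q => dep x y q
      * (Dv E2 y q * Dv E1 (dep x y) q - Dv E1 y q * Dv E2 (dep x y) q))
    fun_prop
  -- rewrite the quantity being differentiated
  show Dv E3 (fun q => (1 / dep x y q)
      * (Dex x y (Dv E3 y) q - Dey x y (Dv E3 x) q + f)) p = 0
  have hE : (fun q => (1 / dep x y q)
      * (Dex x y (Dv E3 y) q - Dey x y (Dv E3 x) q + f))
      = fun q => Dv E2 y q * Dv E1 (Dv E3 y) q - Dv E1 y q * Dv E2 (Dv E3 y) q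
          + (Dv E2 x q * Dv E1 (Dv E3 x) q - Dv E1 x q * Dv E2 (Dv E3 x) q)
          + f * (Dv E1 x q * Dv E2 y q - Dv E2 x q * Dv E1 y q) := by
    funext q
    have hq := hJ' q
    show (1 / (1 / (Dv E1 x q * Dv E2 y q - Dv E2 x q * Dv E1 y q)))
        * ((1 / (Dv E1 x q * Dv E2 y q - Dv E2 x q * Dv E1 y q))
            * (Dv E2 y q * Dv E1 (Dv E3 y) q - Dv E1 y q * Dv E2 (Dv E3 y) q)
          - (1 / (Dv E1 x q * Dv E2 y q - Dv E2 x q * Dv E1 y q))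
            * (-(Dv E2 x q) * Dv E1 (Dv E3 x) q + Dv E1 x q * Dv E2 (Dv E3 x) q)
          + f) = _
    field_simp
    ring
  rw [hE]
  simp (disch := first | exact hJ' _ | assumption | fun_prop) only
    [Dv_mul, Dv_add, Dv_sub, Dv_neg, Dv_inv, Dv_const_mul, Dv_const]
  -- commute the time derivative inside
  rw [Dv_comm hx E3 E1 p, Dv_comm hx E3 E2 p, Dv_comm hy E3 E1 p, Dv_comm hy E3 E2 p,
    Dv_comm hXd E3 E1 p, Dv_comm hXd E3 E2 p, Dv_comm hYd E3 E1 p, Dv_comm hYd E3 E2 p]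
  -- substitute the shallow-water equations
  have hEx0 : ∀ q, -(Dv E3 (Dv E3 x) q) + f * Dv E3 y q - g * Dex x y (dep x y) q = 0 := hEx
  have hEy0 : ∀ q, -(Dv E3 (Dv E3 y) q) - f * Dv E3 x q - g * Dey x y (dep x y) q = 0 := hEy
  have hxdd : Dv E3 (Dv E3 x) = fun q => f * Dv E3 y q - g * Dex x y (dep x y) q :=
    funext fun q => by linarith [hEx0 q]
  have hydd : Dv E3 (Dv E3 y) = fun q => -(f * Dv E3 x q) - g * Dey x y (dep x y) q :=
    funext fun q => by linarith [hEy0 q]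
  rw [hxdd, hydd]
  simp (disch := first | exact hJ' _ | assumption | fun_prop) only
    [Dv_mul, Dv_add, Dv_sub, Dv_neg, Dv_inv, Dv_const_mul, Dv_const]
  linear_combination (-g) * keyA x y (dep x y) hx hy hdep hJ p

end
end

section
/- First variation of the lattice KdV action: let c ∈ ℝ, let u : ℤ² → ℝ satisfy u(n+e₁) − u(n+e₂) > 0 for all n ∈ ℤ², and let v : ℤ² → ℝ have finite support. For w : ℤ² → ℝ with w(n+e₁) − w(n+e₂) > 0 everywhere, set L[w](n) = w(n)·(w(n+e₁) − w(n+e₂)) + c·log(w(n+e₁) − w(n+e₂)). Then there exists ε₀ > 0 such that for |ε| < ε₀ the function n ↦ L[u+εv](n) − L[u](n) has finite support, and the map ε ↦ ∑_{n∈ℤ²} (L[u+εv](n) − L[u](n)) is differentiable at ε = 0 with derivative ∑_{n∈ℤ²} E(n)·v(n), where E(n) = u(n+e₁) − u(n+e₂) + u(n−e₁) − u(n−e₂) − c·[ 1/(u(n+e₁−e₂) − u(n)) − 1/(u(n) − u(n−e₁+e₂)) ]. -/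
noncomputable section

/-- The lattice KdV Lagrangian `L[w](n) = w_{0,0}(w_{1,0} − w_{0,1}) + c·ln(w_{1,0} − w_{0,1})`. -/
def latL (c : ℝ) (w : ℤ × ℤ → ℝ) (n : ℤ × ℤ) : ℝ :=
  w n * (w (n + (1, 0)) - w (n + (0, 1)))
    + c * Real.log (w (n + (1, 0)) - w (n + (0, 1)))

/-- The discrete Euler–Lagrange expression
`Ẽ_u(L) = u_{1,0} − u_{0,1} + u_{−1,0} − u_{0,−1} − c(1/(u_{1,−1} − u_{0,0}) − 1/(u_{0,0} − u_{−1,1}))`. -/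
def latEL (c : ℝ) (u : ℤ × ℤ → ℝ) (n : ℤ × ℤ) : ℝ :=
  u (n + (1, 0)) - u (n + (0, 1)) + u (n - (1, 0)) - u (n - (0, 1))
    - c * (1 / (u (n + (1, -1)) - u n) - 1 / (u n - u (n + (-1, 1))))

/-- The Lagrange multiplier `ν_{0,0} = u_{0,0} − u_{1,1} + c/(u_{1,0} − u_{0,1})`. -/
def latNu (c : ℝ) (u : ℤ × ℤ → ℝ) (n : ℤ × ℤ) : ℝ :=
  u n - u (n + (1, 1)) + c / (u (n + (1, 0)) - u (n + (0, 1)))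

lemma aux_deriv (a b p q r s c k : ℝ) (hd : p - r ≠ 0) :
    HasDerivAt
      (fun ε : ℝ => (a + ε * b) * ((p + ε * q) - (r + ε * s))
        + c * Real.log ((p + ε * q) - (r + ε * s)) - k)
      (b * (p - r) + a * (q - s) + c * ((q - s) / (p - r))) 0 := by
  have hp : HasDerivAt (fun ε : ℝ => p + ε * q) q 0 := by
    simpa using ((hasDerivAt_id (0:ℝ)).mul_const q).const_add p
  have hr : HasDerivAt (fun ε : ℝ => r + ε * s) s 0 := by
    simpa using ((hasDerivAt_id (0:ℝ)).mul_const s).const_add r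
  have ha : HasDerivAt (fun ε : ℝ => a + ε * b) b 0 := by
    simpa using ((hasDerivAt_id (0:ℝ)).mul_const b).const_add a
  have hD : HasDerivAt (fun ε : ℝ => (p + ε * q) - (r + ε * s)) (q - s) 0 := hp.sub hr
  have hD0 : (fun ε : ℝ => (p + ε * q) - (r + ε * s)) 0 ≠ 0 := by simpa using hd
  have hlog := hD.log hD0
  have := ((ha.mul hD).add (hlog.const_mul c)).sub_const k
  exact this.congr_deriv (by simp)

/-- First variation of the lattice KdV action: for `u` with `u_{1,0} − u_{0,1} > 0` everywhere
and `v` of finite support, there is `ε₀ > 0` such that for `|ε| < ε₀` the difference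
`L[u+εv] − L[u]` has finite support, and `ε ↦ ∑_n (L[u+εv](n) − L[u](n))` is differentiable
at `ε = 0` with derivative `∑_n Ẽ_u(L)(n)·v(n)`. -/
theorem stmt_12 (c : ℝ) (u v : ℤ × ℤ → ℝ)
    (hu : ∀ n : ℤ × ℤ, 0 < u (n + (1, 0)) - u (n + (0, 1)))
    (hv : (Function.support v).Finite) :
    ∃ ε₀ > (0 : ℝ),
      (∀ ε : ℝ, |ε| < ε₀ →
        (Function.support
          (fun n => latL c (fun m => u m + ε * v m) n - latL c u n)).Finite) ∧
      HasDerivAt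
        (fun ε : ℝ => ∑ᶠ n : ℤ × ℤ, (latL c (fun m => u m + ε * v m) n - latL c u n))
        (∑ᶠ n : ℤ × ℤ, latEL c u n * v n) 0 := by
  set e1 : ℤ × ℤ := (1, 0)
  set e2 : ℤ × ℤ := (0, 1)
  -- the finite index set
  set T : Set (ℤ × ℤ) := Function.support v ∪ (· + e1) ⁻¹' Function.support v
      ∪ (· + e2) ⁻¹' Function.support v with hT
  have hTfin : T.Finite := by
    refine (Set.Finite.union (Set.Finite.union hv ?_) ?_)
    · exact hv.preimage (Set.injOn_of_injective (add_left_injective e1))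
    · exact hv.preimage (Set.injOn_of_injective (add_left_injective e2))
  set S : Finset (ℤ × ℤ) := hTfin.toFinset with hS
  have hmemS : ∀ n : ℤ × ℤ, (v n ≠ 0 ∨ v (n + e1) ≠ 0 ∨ v (n + e2) ≠ 0) → n ∈ S := by
    intro n hn
    simp only [hS, Set.Finite.mem_toFinset, hT]
    rcases hn with h | h | h
    · exact Or.inl (Or.inl h)
    · exact Or.inl (Or.inr h)
    · exact Or.inr h
  have hzero : ∀ n : ℤ × ℤ, n ∉ S → v n = 0 ∧ v (n + e1) = 0 ∧ v (n + e2) = 0 := by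
    intro n hn
    by_contra h
    push_neg at h
    apply hn
    by_cases h1 : v n = 0
    · by_cases h2 : v (n + e1) = 0
      · exact hmemS n (Or.inr (Or.inr (h h1 h2)))
      · exact hmemS n (Or.inr (Or.inl h2))
    · exact hmemS n (Or.inl h1)
  -- support of difference is in S for every ε
  have hsupp : ∀ ε : ℝ, Function.support
      (fun n => latL c (fun m => u m + ε * v m) n - latL c u n) ⊆ ↑S := by
    intro ε n hn
    by_contra hnS
    obtain ⟨h0, h1, h2⟩ := hzero n hnS
    apply hn
    simp only [latL, h0, h1, h2, e1, e2, mul_zero, add_zero, sub_self]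
  refine ⟨1, one_pos, fun ε _ => (hTfin.subset (by simpa [hS] using hsupp ε)), ?_⟩
  -- rewrite the function as a finite sum
  have hfun : (fun ε : ℝ => ∑ᶠ n : ℤ × ℤ, (latL c (fun m => u m + ε * v m) n - latL c u n))
      = fun ε : ℝ => ∑ n ∈ S, (latL c (fun m => u m + ε * v m) n - latL c u n) := by
    funext ε
    exact finsum_eq_sum_of_support_subset _ (hsupp ε)
  rw [hfun]
  -- derivative of each summand
  set d : ℤ × ℤ → ℝ := fun n =>
    v n * (u (n + e1) - u (n + e2)) + u n * (v (n + e1) - v (n + e2))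
      + c * ((v (n + e1) - v (n + e2)) / (u (n + e1) - u (n + e2))) with hd
  have hderiv : ∀ n ∈ S, HasDerivAt
      (fun ε : ℝ => latL c (fun m => u m + ε * v m) n - latL c u n) (d n) 0 := by
    intro n _
    have := aux_deriv (u n) (v n) (u (n + e1)) (v (n + e1)) (u (n + e2)) (v (n + e2))
      c (latL c u n) (hu n).ne'
    exact this
  have hsum := HasDerivAt.fun_sum hderiv
  refine hsum.congr_deriv ?_
  -- now prove  ∑ᶠ latEL * v = ∑ n ∈ S, d n
  have hvS : Function.support (fun n => latEL c u n * v n) ⊆ ↑S := by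
    intro n hn
    apply hmemS
    left
    intro h0
    apply hn
    simp [h0]
  rw [finsum_eq_sum_of_support_subset _ hvS]
  -- summation by parts via finsum reindexing
  have key2 : (∑ n ∈ S, u n * v (n + e1)) = ∑ n ∈ S, u (n - e1) * v n := by
    rw [← finsum_eq_sum_of_support_subset (fun n => u n * v (n + e1))
        (fun n hn => hmemS n (Or.inr (Or.inl (by intro h0; apply hn; simp [h0])))),
      ← finsum_eq_sum_of_support_subset (fun n => u (n - e1) * v n)
        (fun n hn => hmemS n (Or.inl (by
          intro h0; apply hn; simp [h0])))]
    rw [← finsum_comp_equiv (Equiv.addRight e1) (f := fun n => u (n - e1) * v n)]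
    simp
  have key3 : (∑ n ∈ S, u n * v (n + e2)) = ∑ n ∈ S, u (n - e2) * v n := by
    rw [← finsum_eq_sum_of_support_subset (fun n => u n * v (n + e2))
        (fun n hn => hmemS n (Or.inr (Or.inr (by intro h0; apply hn; simp [h0])))),
      ← finsum_eq_sum_of_support_subset (fun n => u (n - e2) * v n)
        (fun n hn => hmemS n (Or.inl (by intro h0; apply hn; simp [h0])))]
    rw [← finsum_comp_equiv (Equiv.addRight e2) (f := fun n => u (n - e2) * v n)]
    simp
  have key4 : (∑ n ∈ S, c * (v (n + e1) / (u (n + e1) - u (n + e2))))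
      = ∑ n ∈ S, c * (v n / (u (n - e1 + e1) - u (n - e1 + e2))) := by
    rw [← finsum_eq_sum_of_support_subset (fun n => c * (v (n + e1) / (u (n + e1) - u (n + e2))))
        (fun n hn => hmemS n (Or.inr (Or.inl (by
          intro h0; apply hn; simp [h0])))),
      ← finsum_eq_sum_of_support_subset (fun n => c * (v n / (u (n - e1 + e1) - u (n - e1 + e2))))
        (fun n hn => hmemS n (Or.inl (by intro h0; apply hn; simp [h0])))]
    rw [← finsum_comp_equiv (Equiv.addRight e1)
        (f := fun n => c * (v n / (u (n - e1 + e1) - u (n - e1 + e2))))]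
    simp
  have key5 : (∑ n ∈ S, c * (v (n + e2) / (u (n + e1) - u (n + e2))))
      = ∑ n ∈ S, c * (v n / (u (n - e2 + e1) - u (n - e2 + e2))) := by
    rw [← finsum_eq_sum_of_support_subset (fun n => c * (v (n + e2) / (u (n + e1) - u (n + e2))))
        (fun n hn => hmemS n (Or.inr (Or.inr (by
          intro h0; apply hn; simp [h0])))),
      ← finsum_eq_sum_of_support_subset (fun n => c * (v n / (u (n - e2 + e1) - u (n - e2 + e2))))
        (fun n hn => hmemS n (Or.inl (by intro h0; apply hn; simp [h0])))]
    rw [← finsum_comp_equiv (Equiv.addRight e2)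
        (f := fun n => c * (v n / (u (n - e2 + e1) - u (n - e2 + e2))))]
    simp
  -- split d, reindex, recombine
  have hsplit : (∑ n ∈ S, d n)
      = ∑ n ∈ S, v n * (u (n + e1) - u (n + e2))
        + ((∑ n ∈ S, u n * v (n + e1)) - ∑ n ∈ S, u n * v (n + e2))
        + ((∑ n ∈ S, c * (v (n + e1) / (u (n + e1) - u (n + e2))))
          - ∑ n ∈ S, c * (v (n + e2) / (u (n + e1) - u (n + e2)))) := by
    rw [← Finset.sum_sub_distrib, ← Finset.sum_sub_distrib, ← Finset.sum_add_distrib,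
      ← Finset.sum_add_distrib]
    refine Finset.sum_congr rfl fun n _ => ?_
    simp only [hd]
    ring
  rw [hsplit, key2, key3, key4, key5,
    ← Finset.sum_sub_distrib, ← Finset.sum_sub_distrib, ← Finset.sum_add_distrib,
    ← Finset.sum_add_distrib]
  refine Finset.sum_congr rfl fun n _ => ?_
  have i1 : n - e1 + e1 = n := by ring
  have i2 : n - e1 + e2 = n + (-1, 1) := by simp [e1, e2, Prod.ext_iff]; omega
  have i3 : n - e2 + e1 = n + (1, -1) := by simp [e1, e2, Prod.ext_iff]; omega
  have i4 : n - e2 + e2 = n := by ring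
  rw [i1, i2, i3, i4]
  simp only [latEL, e1, e2]
  ring

end
end

section
/- Conservation laws of the lattice KdV equation from constrained gauge symmetries: let c ∈ ℝ and let u : ℤ² → ℝ satisfy u(n+e₁) ≠ u(n+e₂) for all n and the Euler–Lagrange equation Ẽ_u(L)(n) = 0 for all n, and let g : ℤ² → ℝ satisfy g(n+e₁) = g(n+e₂) for all n. With ν(n) = u(n) − u(n+e₁+e₂) + c/(u(n+e₁) − u(n+e₂)), the discrete conservation law D̃₁(g(n)ν(n−e₁)) + D̃₂(−g(n)ν(n−e₂)) = 0 holds for every n ∈ ℤ²; explicitly, g(n+e₁)ν(n) − g(n)ν(n−e₁) − g(n+e₂)ν(n) + g(n)ν(n−e₂) = 0. -/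
noncomputable section

/-- Conservation laws of the lattice KdV equation from constrained gauge symmetries:
on solutions of `Ẽ_u(L) = 0`, for any `g` with `g_{1,0} = g_{0,1}`,
`D̃₁(g(n)ν(n−e₁)) + D̃₂(−g(n)ν(n−e₂)) = 0`, i.e.
`g(n+e₁)ν(n) − g(n)ν(n−e₁) − g(n+e₂)ν(n) + g(n)ν(n−e₂) = 0`. -/
theorem stmt_15 (c : ℝ) (u : ℤ × ℤ → ℝ)
    (hu : ∀ n : ℤ × ℤ, u (n + (1, 0)) ≠ u (n + (0, 1)))
    (hEL : ∀ n : ℤ × ℤ, latEL c u n = 0)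
    (g : ℤ × ℤ → ℝ) (hg : ∀ n : ℤ × ℤ, g (n + (1, 0)) = g (n + (0, 1)))
    (n : ℤ × ℤ) :
    g (n + (1, 0)) * latNu c u n - g n * latNu c u (n - (1, 0))
      - g (n + (0, 1)) * latNu c u n + g n * latNu c u (n - (0, 1)) = 0 := by
  have hnu : latNu c u (n - (1, 0)) = latNu c u (n - (0, 1)) := by
    have h := hEL n
    have h1 := sub_ne_zero_of_ne (hu (n - (0, 1)))
    have h2 := sub_ne_zero_of_ne (hu (n - (1, 0)))
    have e1 : n - (1, 0) + (1, 1) = n + (0, 1) := by obtain ⟨a, b⟩ := n; simp only [Prod.mk_add_mk, Prod.mk_sub_mk, Prod.ext_iff]; omega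
    have e2 : n - (1, 0) + (1, 0) = n := by obtain ⟨a, b⟩ := n; simp only [Prod.mk_add_mk, Prod.mk_sub_mk, Prod.ext_iff]; omega
    have e3 : n - (1, 0) + (0, 1) = n + (-1, 1) := by obtain ⟨a, b⟩ := n; simp only [Prod.mk_add_mk, Prod.mk_sub_mk, Prod.ext_iff]; omega
    have e4 : n - (0, 1) + (1, 1) = n + (1, 0) := by obtain ⟨a, b⟩ := n; simp only [Prod.mk_add_mk, Prod.mk_sub_mk, Prod.ext_iff]; omega
    have e5 : n - (0, 1) + (1, 0) = n + (1, -1) := by obtain ⟨a, b⟩ := n; simp only [Prod.mk_add_mk, Prod.mk_sub_mk, Prod.ext_iff]; omega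
    have e6 : n - (0, 1) + (0, 1) = n := by obtain ⟨a, b⟩ := n; simp only [Prod.mk_add_mk, Prod.mk_sub_mk, Prod.ext_iff]; omega
    simp only [latEL] at h
    simp only [latNu, e1, e2, e3, e4, e5, e6]
    rw [e5, e6] at h1
    rw [e2, e3] at h2
    rw [mul_sub, mul_one_div, mul_one_div] at h
    linarith
  rw [hg n, hnu]
  ring

end
end

section
/- The discrete potential KdV equation implies the lattice KdV Euler–Lagrange equation: let c ∈ ℝ and let u : ℤ² → ℝ satisfy u(n+e₁) ≠ u(n+e₂) for all n and the discrete potential KdV equation (u(n+e₁+e₂) − u(n))·(u(n+e₁) − u(n+e₂)) = c for all n ∈ ℤ². Then for every n ∈ ℤ²: u(n+e₁) − u(n+e₂) + u(n−e₁) − u(n−e₂) − c·[ 1/(u(n+e₁−e₂) − u(n)) − 1/(u(n) − u(n−e₁+e₂)) ] = 0. -/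
/-- The discrete potential KdV equation `(u_{1,1} − u_{0,0})(u_{1,0} − u_{0,1}) = c`
implies the lattice KdV Euler–Lagrange equation
`u_{1,0} − u_{0,1} + u_{−1,0} − u_{0,−1} − c(1/(u_{1,−1} − u_{0,0}) − 1/(u_{0,0} − u_{−1,1})) = 0`. -/
theorem stmt_16 (c : ℝ) (u : ℤ × ℤ → ℝ)
    (hu : ∀ n : ℤ × ℤ, u (n + (1, 0)) ≠ u (n + (0, 1)))
    (hpkdv : ∀ n : ℤ × ℤ,
      (u (n + (1, 1)) - u n) * (u (n + (1, 0)) - u (n + (0, 1))) = c)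
    (n : ℤ × ℤ) :
    u (n + (1, 0)) - u (n + (0, 1)) + u (n - (1, 0)) - u (n - (0, 1))
      - c * (1 / (u (n + (1, -1)) - u n) - 1 / (u n - u (n + (-1, 1)))) = 0 := by
  have h1 := hpkdv (n + (0, -1))
  have h2 := hpkdv (n + (-1, 0))
  have hu1 := hu (n + (0, -1))
  have hu2 := hu (n + (-1, 0))
  have e1 : n + (0, -1) + (1, 1) = n + (1, 0) := by simp [Prod.ext_iff, Prod.fst_add, Prod.snd_add, Prod.fst_sub, Prod.snd_sub] <;> omega
  have e2 : n + (0, -1) + (1, 0) = n + (1, -1) := by simp [Prod.ext_iff, Prod.fst_add, Prod.snd_add, Prod.fst_sub, Prod.snd_sub] <;> omega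
  have e3 : n + (0, -1) + (0, 1) = n := by simp [Prod.ext_iff, Prod.fst_add, Prod.snd_add, Prod.fst_sub, Prod.snd_sub] <;> omega
  have e4 : n + (-1, 0) + (1, 1) = n + (0, 1) := by simp [Prod.ext_iff, Prod.fst_add, Prod.snd_add, Prod.fst_sub, Prod.snd_sub] <;> omega
  have e5 : n + (-1, 0) + (1, 0) = n := by simp [Prod.ext_iff, Prod.fst_add, Prod.snd_add, Prod.fst_sub, Prod.snd_sub] <;> omega
  have e6 : n + (-1, 0) + (0, 1) = n + (-1, 1) := by simp [Prod.ext_iff, Prod.fst_add, Prod.snd_add, Prod.fst_sub, Prod.snd_sub] <;> omega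
  have e7 : n - (1, 0) = n + (-1, 0) := by simp [Prod.ext_iff, Prod.fst_add, Prod.snd_add, Prod.fst_sub, Prod.snd_sub] <;> omega
  have e8 : n - (0, 1) = n + (0, -1) := by simp [Prod.ext_iff, Prod.fst_add, Prod.snd_add, Prod.fst_sub, Prod.snd_sub] <;> omega
  rw [e1, e2, e3] at h1; rw [e2, e3] at hu1
  rw [e4, e5, e6] at h2; rw [e5, e6] at hu2
  rw [e7, e8]
  have d1 : u (n + (1, -1)) - u n ≠ 0 := sub_ne_zero.mpr hu1
  have d2 : u n - u (n + (-1, 1)) ≠ 0 := sub_ne_zero.mpr hu2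
  field_simp
  linear_combination (u n - u (n + (-1, 1))) * h1 - (u (n + (1, -1)) - u n) * h2
end

section
/- Gauge invariance of the Christiansen–Halvorsen discrete Maxwell–Klein–Gordon Lagrangian: let ψ : (Fin 4 → ℤ) → ℂ, λ : (Fin 4 → ℤ) → ℝ, A_μ : (Fin 4 → ℤ) → ℝ for each μ ∈ Fin 4, h_μ ∈ ℝ nonzero, and e, m ∈ ℝ. Define F_{μν} = D̄_μA_ν − D̄_νA_μ, (∇̃_μψ)(n) = (ψ(n+e_μ) − exp(−i·e·h_μ·A_μ(n))ψ(n))/h_μ, and L[ψ,A](n) = (1/4)∑_{μ,ν} η^{μμ}η^{νν}F_{μν}(n)² + ∑_μ η^{μμ}·(∇̃_μψ)(n)·conj((∇̃_μψ)(n)) + m²·ψ(n)·conj(ψ(n)). Then for every n: L[exp(−ieλ)ψ, A + D̄λ](n) = L[ψ, A](n), where the gauge transformation replaces ψ(n) by exp(−i·e·λ(n))ψ(n) and A_μ by A_μ + D̄_μλ. -/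
noncomputable section

/-- Diagonal entries of the flat space-time metric `η = diag(−1,1,1,1)`. -/
def eta : Fin 4 → ℝ := fun μ => if μ = 0 then -1 else 1

/-- Scaled forward difference `D̄_μ f = (f(n+e_μ) − f(n))/h_μ` on real lattice functions. -/
def dbarR (h : Fin 4 → ℝ) (μ : Fin 4) (f : (Fin 4 → ℤ) → ℝ) (n : Fin 4 → ℤ) : ℝ :=
  (f (n + Pi.single μ 1) - f n) / h μ

/-- The Christiansen–Halvorsen covariant difference operator
`(∇̃_μ[A]ψ)(n) = (ψ(n+e_μ) − exp(−ieh_μA_μ(n))ψ(n))/h_μ`. -/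
def cdiff (e : ℝ) (h : Fin 4 → ℝ) (A : Fin 4 → (Fin 4 → ℤ) → ℝ) (μ : Fin 4)
    (ψ : (Fin 4 → ℤ) → ℂ) (n : Fin 4 → ℤ) : ℂ :=
  (ψ (n + Pi.single μ 1) - Complex.exp (-(Complex.I * e * h μ * A μ n)) * ψ n) / (h μ : ℂ)

/-- Discrete field strength `F_{μν} = D̄_μA_ν − D̄_νA_μ`. -/
def dFst (h : Fin 4 → ℝ) (A : Fin 4 → (Fin 4 → ℤ) → ℝ) (μ ν : Fin 4)
    (n : Fin 4 → ℤ) : ℝ :=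
  dbarR h μ (A ν) n - dbarR h ν (A μ) n

/-- The Christiansen–Halvorsen discrete Maxwell–Klein–Gordon Lagrangian
`L = (1/4)∑ F_{μν}F^{μν} + ∑ η^{μμ}(∇̃_μψ)conj(∇̃_μψ) + m²ψ·conj(ψ)`. -/
def dmkgL (e m : ℝ) (h : Fin 4 → ℝ) (ψ : (Fin 4 → ℤ) → ℂ)
    (A : Fin 4 → (Fin 4 → ℤ) → ℝ) (n : Fin 4 → ℤ) : ℂ :=
  (((1 / 4 : ℝ) * ∑ μ, ∑ ν, eta μ * eta ν * dFst h A μ ν n * dFst h A μ ν n : ℝ) : ℂ)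
    + ∑ μ, (eta μ : ℂ) * cdiff e h A μ ψ n * (starRingEnd ℂ) (cdiff e h A μ ψ n)
    + (m ^ 2 : ℝ) * ψ n * (starRingEnd ℂ) (ψ n)

lemma dFst_gauge (h : Fin 4 → ℝ) (A : Fin 4 → (Fin 4 → ℤ) → ℝ) (lam : (Fin 4 → ℤ) → ℝ)
    (μ ν : Fin 4) (n : Fin 4 → ℤ) :
    dFst h (fun μ k => A μ k + dbarR h μ lam k) μ ν n = dFst h A μ ν n := by
  have hc : n + Pi.single μ 1 + Pi.single ν 1 = n + Pi.single ν 1 + Pi.single μ 1 :=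
    add_right_comm _ _ _
  unfold dFst dbarR
  dsimp only
  rw [hc]
  ring

lemma cdiff_gauge (e : ℝ) (h : Fin 4 → ℝ) (hh : ∀ μ, h μ ≠ 0)
    (A : Fin 4 → (Fin 4 → ℤ) → ℝ) (lam : (Fin 4 → ℤ) → ℝ) (ψ : (Fin 4 → ℤ) → ℂ)
    (μ : Fin 4) (n : Fin 4 → ℤ) :
    cdiff e h (fun μ k => A μ k + dbarR h μ lam k) μ
        (fun k => Complex.exp (-(Complex.I * e * lam k)) * ψ k) n
      = Complex.exp (-(Complex.I * e * lam (n + Pi.single μ 1))) * cdiff e h A μ ψ n := by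
  unfold cdiff dbarR
  dsimp only
  push_cast
  have h1 : (-(Complex.I * e * h μ * (A μ n + (lam (n + Pi.single μ 1) - lam n) / h μ)) : ℂ)
      = (-(Complex.I * e * lam (n + Pi.single μ 1))) + (Complex.I * e * lam n)
        + (-(Complex.I * e * h μ * A μ n)) := by
    have hz : (h μ : ℂ) ≠ 0 := Complex.ofReal_ne_zero.mpr (hh μ)
    field_simp
    ring
  rw [h1, Complex.exp_add, Complex.exp_add]
  have h2 : Complex.exp (Complex.I * e * lam n) * Complex.exp (-(Complex.I * e * lam n)) = 1 := by
    rw [← Complex.exp_add]; ring_nf; exact Complex.exp_zero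
  linear_combination (-(Complex.exp (-(Complex.I * e * lam (n + Pi.single μ 1)))
    * Complex.exp (-(Complex.I * e * h μ * A μ n)) * ψ n / (h μ : ℂ))) * h2

lemma phase_unit (e : ℝ) (x : ℝ) :
    Complex.exp (-(Complex.I * e * x)) * (starRingEnd ℂ) (Complex.exp (-(Complex.I * e * x))) = 1 := by
  rw [← Complex.exp_conj]
  simp only [map_neg, map_mul, Complex.conj_I, Complex.conj_ofReal]
  rw [← Complex.exp_add]
  ring_nf
  exact Complex.exp_zero

/-- Gauge invariance of the Christiansen–Halvorsen discrete Maxwell–Klein–Gordon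
Lagrangian: `L[exp(−ieλ)ψ, A + D̄λ](n) = L[ψ, A](n)`. -/
theorem stmt_18 (ψ : (Fin 4 → ℤ) → ℂ) (lam : (Fin 4 → ℤ) → ℝ)
    (A : Fin 4 → (Fin 4 → ℤ) → ℝ) (h : Fin 4 → ℝ) (hh : ∀ μ, h μ ≠ 0) (e m : ℝ)
    (n : Fin 4 → ℤ) :
    dmkgL e m h (fun k => Complex.exp (-(Complex.I * e * lam k)) * ψ k)
        (fun μ k => A μ k + dbarR h μ lam k) n
      = dmkgL e m h ψ A n := by
  unfold dmkgL
  congr 1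
  · congr 1
    · norm_cast
      refine congrArg _ (Finset.sum_congr rfl fun μ _ => Finset.sum_congr rfl fun ν _ => ?_)
      rw [dFst_gauge]
    · refine Finset.sum_congr rfl fun μ _ => ?_
      rw [cdiff_gauge e h hh A lam ψ μ n]
      simp only [map_mul]
      calc (eta μ : ℂ) * (Complex.exp (-(Complex.I * e * lam (n + Pi.single μ 1))) * cdiff e h A μ ψ n)
            * ((starRingEnd ℂ) (Complex.exp (-(Complex.I * e * lam (n + Pi.single μ 1))))
              * (starRingEnd ℂ) (cdiff e h A μ ψ n))
          = (Complex.exp (-(Complex.I * e * lam (n + Pi.single μ 1)))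
              * (starRingEnd ℂ) (Complex.exp (-(Complex.I * e * lam (n + Pi.single μ 1)))))
            * ((eta μ : ℂ) * cdiff e h A μ ψ n * (starRingEnd ℂ) (cdiff e h A μ ψ n)) := by ring
        _ = _ := by rw [phase_unit]; ring
  · simp only [map_mul]
    calc (m ^ 2 : ℝ) * (Complex.exp (-(Complex.I * e * lam n)) * ψ n)
          * ((starRingEnd ℂ) (Complex.exp (-(Complex.I * e * lam n))) * (starRingEnd ℂ) (ψ n))
        = (Complex.exp (-(Complex.I * e * lam n))
            * (starRingEnd ℂ) (Complex.exp (-(Complex.I * e * lam n))))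
          * ((m ^ 2 : ℝ) * ψ n * (starRingEnd ℂ) (ψ n)) := by ring
      _ = _ := by rw [phase_unit]; ring

end
end

section
/- Discrete Noether's Second Theorem relation for the Christiansen–Halvorsen scheme: let ψ : (Fin 4 → ℤ) → ℂ, A_μ : (Fin 4 → ℤ) → ℝ for each μ ∈ Fin 4, h_μ ∈ ℝ nonzero, and e, m ∈ ℝ. With F_{μν} = D̄_μA_ν − D̄_νA_μ, F^{σβ} = η^{σσ}η^{ββ}F_{σβ}, (∇̃_μψ)(n) = (ψ(n+e_μ) − exp(−i·e·h_μ·A_μ(n))ψ(n))/h_μ, D̄_μ†f(n) = −(f(n) − f(n−e_μ))/h_μ, ∇̃_μ†f(n) = D̄_μ†f(n) + ((1 − exp(−i·e·h_μ·A_μ(n)))/h_μ)·f(n), and ∇̃_μ‡f(n) = D̄_μ†f(n) + ((1 − exp(i·e·h_μ·A_μ(n)))/h_μ)·f(n), define the discrete Euler–Lagrange expressions E_ψ(n) = ∑_μ η^{μμ}·∇̃_μ†( conj(∇̃_μψ) )(n) + m²·conj(ψ(n)), E_{ψ*}(n) = ∑_μ η^{μμ}·∇̃_μ‡( ∇̃_μψ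 )(n) + m²·ψ(n), and for each σ, E_σ(n) = i·e·exp(−i·e·h_σ·A_σ(n))·ψ(n)·conj((∇̃_σψ)(n)) − i·e·exp(i·e·h_σ·A_σ(n))·conj(ψ(n))·(∇̃_σψ)(n) − η_{σσ}∑_β D̄_β†(F^{σβ})(n). Then the difference relation −i·e·ψ(n)·E_ψ(n) + i·e·conj(ψ(n))·E_{ψ*}(n) + ∑_σ η^{σσ}·D̄_σ†(E_σ)(n) = 0 holds for every n, identically in ψ and A (not merely on solutions). -/
noncomputable section

/-- Adjoint scaled difference `D̄_μ†f(n) = −(f(n) − f(n−e_μ))/h_μ` on complex lattice functions. -/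
def dadjC (h : Fin 4 → ℝ) (μ : Fin 4) (f : (Fin 4 → ℤ) → ℂ) (n : Fin 4 → ℤ) : ℂ :=
  -((f n - f (n - Pi.single μ 1)) / (h μ : ℂ))

/-- Adjoint scaled difference `D̄_μ†f(n) = −(f(n) − f(n−e_μ))/h_μ` on real lattice functions. -/
def dadjR (h : Fin 4 → ℝ) (μ : Fin 4) (f : (Fin 4 → ℤ) → ℝ) (n : Fin 4 → ℤ) : ℝ :=
  -((f n - f (n - Pi.single μ 1)) / h μ)

/-- The adjoint covariant difference operator
`∇̃_μ†f(n) = D̄_μ†f(n) + ((1 − exp(−ieh_μA_μ(n)))/h_μ)·f(n)`. -/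
def cadj (e : ℝ) (h : Fin 4 → ℝ) (A : Fin 4 → (Fin 4 → ℤ) → ℝ) (μ : Fin 4)
    (f : (Fin 4 → ℤ) → ℂ) (n : Fin 4 → ℤ) : ℂ :=
  dadjC h μ f n + ((1 - Complex.exp (-(Complex.I * e * h μ * A μ n))) / (h μ : ℂ)) * f n

/-- The conjugate adjoint covariant difference operator
`∇̃_μ‡f(n) = D̄_μ†f(n) + ((1 − exp(ieh_μA_μ(n)))/h_μ)·f(n)`. -/
def cadj' (e : ℝ) (h : Fin 4 → ℝ) (A : Fin 4 → (Fin 4 → ℤ) → ℝ) (μ : Fin 4)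
    (f : (Fin 4 → ℤ) → ℂ) (n : Fin 4 → ℤ) : ℂ :=
  dadjC h μ f n + ((1 - Complex.exp (Complex.I * e * h μ * A μ n)) / (h μ : ℂ)) * f n

/-- Raised-index discrete field strength `F^{σβ} = η^{σσ}η^{ββ}F_{σβ}`. -/
def dFup (h : Fin 4 → ℝ) (A : Fin 4 → (Fin 4 → ℤ) → ℝ) (σ β : Fin 4)
    (n : Fin 4 → ℤ) : ℝ :=
  eta σ * eta β * dFst h A σ β n

/-- Discrete Euler–Lagrange expression `E_ψ = ∑_μ η^{μμ}∇̃_μ†(conj(∇̃_μψ)) + m²·conj(ψ)`. -/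
def dEpsi (e m : ℝ) (h : Fin 4 → ℝ) (ψ : (Fin 4 → ℤ) → ℂ)
    (A : Fin 4 → (Fin 4 → ℤ) → ℝ) (n : Fin 4 → ℤ) : ℂ :=
  (∑ μ, (eta μ : ℂ) * cadj e h A μ (fun m' => (starRingEnd ℂ) (cdiff e h A μ ψ m')) n)
    + (m ^ 2 : ℝ) * (starRingEnd ℂ) (ψ n)

/-- Discrete Euler–Lagrange expression `E_{ψ*} = ∑_μ η^{μμ}∇̃_μ‡(∇̃_μψ) + m²ψ`. -/
def dEpsiStar (e m : ℝ) (h : Fin 4 → ℝ) (ψ : (Fin 4 → ℤ) → ℂ)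
    (A : Fin 4 → (Fin 4 → ℤ) → ℝ) (n : Fin 4 → ℤ) : ℂ :=
  (∑ μ, (eta μ : ℂ) * cadj' e h A μ (fun m' => cdiff e h A μ ψ m') n)
    + (m ^ 2 : ℝ) * ψ n

/-- Discrete Euler–Lagrange expression
`E_σ = ie·exp(−ieh_σA_σ)ψ·conj(∇̃_σψ) − ie·exp(ieh_σA_σ)·conj(ψ)·∇̃_σψ − η_{σσ}∑_β D̄_β†(F^{σβ})`. -/
def dEsig (e : ℝ) (h : Fin 4 → ℝ) (ψ : (Fin 4 → ℤ) → ℂ)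
    (A : Fin 4 → (Fin 4 → ℤ) → ℝ) (σ : Fin 4) (n : Fin 4 → ℤ) : ℂ :=
  Complex.I * e * Complex.exp (-(Complex.I * e * h σ * A σ n)) * ψ n
      * (starRingEnd ℂ) (cdiff e h A σ ψ n)
    - Complex.I * e * Complex.exp (Complex.I * e * h σ * A σ n)
      * (starRingEnd ℂ) (ψ n) * cdiff e h A σ ψ n
    - ((eta σ * ∑ β, dadjR h β (dFup h A σ β) n : ℝ) : ℂ)


lemma pt1 (n a : Fin 4 → ℤ) : n - a + a = n := sub_add_cancel _ _

lemma ptA (n a b : Fin 4 → ℤ) : n - (a + b) + a = n - b := by abel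

lemma ptB (n a b : Fin 4 → ℤ) : n - (a + b) + b = n - a := by abel

lemma cexp1 (a b c : ℝ) :
    (starRingEnd ℂ) (Complex.exp (-(Complex.I * a * b * c))) = Complex.exp (Complex.I * a * b * c) := by
  rw [← Complex.exp_conj]; simp

lemma cexp2 (a b c : ℝ) :
    (starRingEnd ℂ) (Complex.exp (Complex.I * a * b * c)) = Complex.exp (-(Complex.I * a * b * c)) := by
  rw [← Complex.exp_conj]; simp

set_option maxHeartbeats 2000000 in
lemma matter_dir (ψ : (Fin 4 → ℤ) → ℂ) (A : Fin 4 → (Fin 4 → ℤ) → ℝ)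
    (h : Fin 4 → ℝ) (hh : ∀ μ, h μ ≠ 0) (e : ℝ) (μ : Fin 4) (n : Fin 4 → ℤ) :
    -(Complex.I * e * ψ n * cadj e h A μ (fun m' => (starRingEnd ℂ) (cdiff e h A μ ψ m')) n)
      + Complex.I * e * (starRingEnd ℂ) (ψ n) * cadj' e h A μ (fun m' => cdiff e h A μ ψ m') n
      + dadjC h μ (fun k =>
          Complex.I * e * Complex.exp (-(Complex.I * e * h μ * A μ k)) * ψ k
              * (starRingEnd ℂ) (cdiff e h A μ ψ k)
            - Complex.I * e * Complex.exp (Complex.I * e * h μ * A μ k)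
              * (starRingEnd ℂ) (ψ k) * cdiff e h A μ ψ k) n = 0 := by
  simp only [cadj, cadj', dadjC, cdiff, pt1, map_div₀, map_sub, map_mul,
    Complex.conj_ofReal, cexp1, cexp2]
  simp only [Complex.exp_neg]
  have h1' : (h μ : ℂ) ≠ 0 := Complex.ofReal_ne_zero.mpr (hh μ)
  have e1 : Complex.exp (Complex.I * e * h μ * A μ n) ≠ 0 := Complex.exp_ne_zero _
  have e2 : Complex.exp (Complex.I * e * h μ * A μ (n - Pi.single μ 1)) ≠ 0 := Complex.exp_ne_zero _
  field_simp [h1', e1, e2]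
  ring_nf


lemma ptC (n a b : Fin 4 → ℤ) : n - a - b + a = n - b := by abel

lemma dadjR_add4 (h : Fin 4 → ℝ) (σ : Fin 4) (f g i j : (Fin 4 → ℤ) → ℝ) (n : Fin 4 → ℤ) :
    dadjR h σ (fun k => f k + g k + i k + j k) n
      = dadjR h σ f n + dadjR h σ g n + dadjR h σ i n + dadjR h σ j n := by
  simp only [dadjR]; ring

set_option maxHeartbeats 1000000 in
lemma Fpair (h : Fin 4 → ℝ) (A : Fin 4 → (Fin 4 → ℤ) → ℝ) (σ β : Fin 4) (n : Fin 4 → ℤ) :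
    dadjR h σ (dadjR h β (dFup h A σ β)) n + dadjR h β (dadjR h σ (dFup h A β σ)) n = 0 := by
  simp only [dadjR, dFup, dFst, dbarR, pt1, ptC]
  rw [show n - Pi.single β 1 - Pi.single σ 1 = n - Pi.single σ 1 - Pi.single β 1 from by abel]
  ring

set_option maxHeartbeats 4000000 in
lemma Fzero (A : Fin 4 → (Fin 4 → ℤ) → ℝ) (h : Fin 4 → ℝ) (n : Fin 4 → ℤ) :
    ∑ σ, dadjR h σ (fun k => ∑ β, dadjR h β (dFup h A σ β) k) n = 0 := by
  simp only [Fin.sum_univ_four, dadjR_add4]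
  linear_combination ((1:ℝ)/2) * (Fpair h A 0 0 n + Fpair h A 0 1 n + Fpair h A 0 2 n
    + Fpair h A 0 3 n + Fpair h A 1 0 n + Fpair h A 1 1 n + Fpair h A 1 2 n + Fpair h A 1 3 n
    + Fpair h A 2 0 n + Fpair h A 2 1 n + Fpair h A 2 2 n + Fpair h A 2 3 n
    + Fpair h A 3 0 n + Fpair h A 3 1 n + Fpair h A 3 2 n + Fpair h A 3 3 n)


set_option maxHeartbeats 4000000 in
/-- Discrete Noether's Second Theorem relation for the Christiansen–Halvorsen scheme:
`−ieψ·E_ψ + ie·conj(ψ)·E_{ψ*} + ∑_σ η^{σσ}D̄_σ†(E_σ) = 0` identically in `ψ` and `A`. -/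
theorem stmt_19 (ψ : (Fin 4 → ℤ) → ℂ) (A : Fin 4 → (Fin 4 → ℤ) → ℝ)
    (h : Fin 4 → ℝ) (hh : ∀ μ, h μ ≠ 0) (e m : ℝ) (n : Fin 4 → ℤ) :
    -(Complex.I * e * ψ n * dEpsi e m h ψ A n)
      + Complex.I * e * (starRingEnd ℂ) (ψ n) * dEpsiStar e m h ψ A n
      + ∑ σ, (eta σ : ℂ) * dadjC h σ (dEsig e h ψ A σ) n = 0 := by
  have key : ∀ σ : Fin 4, (eta σ : ℂ) * dadjC h σ (dEsig e h ψ A σ) n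
      = (eta σ : ℂ) * dadjC h σ (fun k =>
          Complex.I * e * Complex.exp (-(Complex.I * e * h σ * A σ k)) * ψ k
              * (starRingEnd ℂ) (cdiff e h A σ ψ k)
            - Complex.I * e * Complex.exp (Complex.I * e * h σ * A σ k)
              * (starRingEnd ℂ) (ψ k) * cdiff e h A σ ψ k) n
        - ((dadjR h σ (fun k => ∑ β, dadjR h β (dFup h A σ β) k) n : ℝ) : ℂ) := by
    intro σ
    fin_cases σ <;>
      (simp only [dadjC, dEsig, dadjR, eta]; norm_num; push_cast; ring)
  have hF0 := Fzero A h n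
  rw [Fin.sum_univ_four] at hF0
  have hFc : ((dadjR h 0 (fun k => ∑ β, dadjR h β (dFup h A 0 β) k) n : ℝ) : ℂ)
      + ((dadjR h 1 (fun k => ∑ β, dadjR h β (dFup h A 1 β) k) n : ℝ) : ℂ)
      + ((dadjR h 2 (fun k => ∑ β, dadjR h β (dFup h A 2 β) k) n : ℝ) : ℂ)
      + ((dadjR h 3 (fun k => ∑ β, dadjR h β (dFup h A 3 β) k) n : ℝ) : ℂ) = 0 := by
    exact_mod_cast hF0
  simp only [dEpsi, dEpsiStar, Fin.sum_univ_four, key]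
  simp only [Fin.sum_univ_four] at hFc ⊢
  linear_combination (eta 0 : ℂ) * matter_dir ψ A h hh e 0 n
    + (eta 1 : ℂ) * matter_dir ψ A h hh e 1 n
    + (eta 2 : ℂ) * matter_dir ψ A h hh e 2 n
    + (eta 3 : ℂ) * matter_dir ψ A h hh e 3 n
    - hFc

end
end
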